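/- Let P be a non-atomic probability distribution on ℝ with finite positive standard deviation σ_P, let k ≥ 2, and let Z₁, Z₂, …, Z_k be independent random variables each distributed according to P. Then for any ξ > 0, Pr[Z₁ > Z_j for all j ∈ {2, …, k} and Z₁ − Z_k ≤ ξ] ≥ (1/(16k²)) · min{1/8, ξ/(64 σ_P √k)}. -/

import Mathlib

open MeasureTheory ProbabilityTheory Set

lemma cdf_continuous' (P : Measure ℝ) [IsProbabilityMeasure P]
    (hatom : ∀ x : ℝ, P {x} = 0) : Continuous (cdf P) := by
  rw [continuous_iff_continuousAt]
  intro a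
  rw [(monotone_cdf P).continuousAt_iff_leftLim_eq_rightLim]
  have hR : Function.rightLim (cdf P) a = cdf P a := (cdf P).rightLim_eq a
  have hsing : (cdf P).measure {a} = 0 := by rw [measure_cdf]; exact hatom a
  rw [StieltjesFunction.measure_singleton] at hsing
  have hle : Function.leftLim (cdf P) a ≤ cdf P a :=
    (monotone_cdf P).leftLim_le le_rfl
  have : cdf P a - Function.leftLim (cdf P) a ≤ 0 := by
    by_contra h
    push_neg at h
    rw [ENNReal.ofReal_eq_zero] at hsing; linarith
  rw [hR]
  linarith

lemma pi_two_special_measure (P : Measure ℝ) [IsProbabilityMeasure P]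
    (k : ℕ) (hk : 2 ≤ k) (S T U : Set ℝ) :
    (Measure.pi fun _ : Fin k => P)
      (univ.pi (fun j : Fin k => if j = ⟨0, Nat.lt_of_lt_of_le (by norm_num) hk⟩ then S
        else if j = ⟨k - 1, Nat.sub_lt (Nat.lt_of_lt_of_le (by norm_num) hk) Nat.one_pos⟩ then T else U)) = P S * P T * P U ^ (k - 2) := by
  set i0 : Fin k := ⟨0, Nat.lt_of_lt_of_le (by norm_num) hk⟩
  set iK : Fin k := ⟨k - 1, Nat.sub_lt (Nat.lt_of_lt_of_le (by norm_num) hk) Nat.one_pos⟩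
  have hne : i0 ≠ iK := by simp [i0, iK, Fin.ext_iff]; omega
  rw [Measure.pi_pi]
  set f : Fin k → ENNReal := fun j => P (if j = i0 then S else if j = iK then T else U) with hf
  have h1 : ∏ j, f j = f i0 * ∏ j ∈ Finset.univ.erase i0, f j :=
    (Finset.mul_prod_erase Finset.univ f (Finset.mem_univ i0)).symm
  have hmem : iK ∈ Finset.univ.erase i0 := Finset.mem_erase.2 ⟨hne.symm, Finset.mem_univ _⟩
  have h2 : ∏ j ∈ Finset.univ.erase i0, f j
      = f iK * ∏ j ∈ (Finset.univ.erase i0).erase iK, f j :=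
    (Finset.mul_prod_erase _ f hmem).symm
  have h3 : ∏ j ∈ (Finset.univ.erase i0).erase iK, f j = P U ^ (k - 2) := by
    rw [Finset.prod_congr rfl (fun j hj => ?_), Finset.prod_const]
    · congr 1
      rw [Finset.card_erase_of_mem hmem, Finset.card_erase_of_mem (Finset.mem_univ _)]
      simp [Finset.card_univ]; omega
    · simp only [Finset.mem_erase] at hj
      simp [hf, hj.1, hj.2.1]
  rw [h1, h2, h3]
  have h4 : f i0 = P S := by simp [hf]
  have h5 : f iK = P T := by simp [hf, hne.symm]
  rw [h4, h5]; ring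


set_option maxHeartbeats 2000000 in
/-- **A strict maximum close to a given coordinate has non-negligible probability.**
Let `P` be a non-atomic probability distribution on `ℝ` with finite positive
standard deviation `σP`, let `k ≥ 2`, and let `Z₁, …, Z_k` be i.i.d. with law `P`
(modeled by the product measure on `Fin k → ℝ`). Then for any `ξ > 0`,
`Pr[Z₁ > Z_j for all j ∈ {2,…,k} and Z₁ - Z_k ≤ ξ]
  ≥ (1/(16k²)) · min {1/8, ξ/(64 σP √k)}`. -/
theorem strict_max_close_prob_lower_bound
    (P : Measure ℝ) [IsProbabilityMeasure P]
    (hatom : ∀ x : ℝ, P {x} = 0)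
    (hL2 : MemLp id 2 P)
    (σP : ℝ) (hσ : 0 < σP) (hvar : variance id P = σP ^ 2)
    (k : ℕ) (hk : 2 ≤ k)
    (ξ : ℝ) (hξ : 0 < ξ) :
    ((Measure.pi fun _ : Fin k => P)
        {z : Fin k → ℝ |
          (∀ j : Fin k, j ≠ ⟨0, by omega⟩ → z ⟨0, by omega⟩ > z j) ∧
          z ⟨0, by omega⟩ - z ⟨k - 1, by omega⟩ ≤ ξ}).toReal ≥
      (1 / (16 * (k : ℝ) ^ 2)) * min (1 / 8) (ξ / (64 * σP * Real.sqrt k)) := by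
  classical
  have hkR : (2:ℝ) ≤ k := by exact_mod_cast hk
  have hk0 : (0:ℝ) < k := by linarith
  set F : ℝ → ℝ := fun x => cdf P x with hF
  have hFcont : Continuous F := cdf_continuous' P hatom
  have hFmono : Monotone F := monotone_cdf P
  have hIoc : ∀ a b : ℝ, P (Ioc a b) = ENNReal.ofReal (F b - F a) := by
    intro a b
    conv_lhs => rw [← measure_cdf (μ := P)]
    exact (cdf P).measure_Ioc a b
  have hFtoReal : ∀ a : ℝ, F a = (P (Iic a)).toReal := fun a => cdf_eq_real P a
  have hFnonneg : ∀ a : ℝ, 0 ≤ F a := fun a => cdf_nonneg P a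
  set μ := ∫ x, x ∂P with hμ
  set r := σP * Real.sqrt (2 * k) with hr
  have hrpos : 0 < r := by positivity
  -- Chebyshev
  have hcheb : P {x | r ≤ |x - μ|} ≤ ENNReal.ofReal (1 / (2 * k)) := by
    have h := meas_ge_le_variance_div_sq (μ := P) hL2 hrpos
    have hrsq : r ^ 2 = σP ^ 2 * (2 * k) := by
      rw [hr, mul_pow, Real.sq_sqrt (by positivity)]
    have heq : variance id P / r ^ 2 = 1 / (2 * k) := by
      rw [hvar, hrsq]; field_simp
    rw [heq] at h
    convert h using 2
    rfl
  have hhalf : (1:ℝ)/(2*k) ≤ 1/4 := by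
    rw [div_le_div_iff₀ (by positivity) (by norm_num)]; linarith
  set A := μ - r with hA
  set B := μ + r with hB
  -- tail bounds for the cdf
  have hFA : F A ≤ 1 / (2 * k) := by
    rw [hFtoReal]
    have hsub : Iic A ⊆ {x | r ≤ |x - μ|} := by
      intro x hx
      simp only [mem_Iic] at hx
      simp only [mem_setOf_eq, abs_sub_comm]
      rw [le_abs]
      right; simp only [hA] at hx; linarith
    have := le_trans (measure_mono hsub) hcheb
    calc (P (Iic A)).toReal ≤ (ENNReal.ofReal (1 / (2*k))).toReal :=
          ENNReal.toReal_mono ENNReal.ofReal_ne_top this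
      _ = 1 / (2*k) := ENNReal.toReal_ofReal (by positivity)
  have hFB : 1 - 1 / (2 * k) ≤ F B := by
    have hsub : Ioi B ⊆ {x | r ≤ |x - μ|} := by
      intro x hx
      simp only [mem_Ioi] at hx
      simp only [mem_setOf_eq]
      rw [le_abs]
      left; simp only [hB] at hx; linarith
    have h1 : P (Ioi B) ≤ ENNReal.ofReal (1 / (2 * k)) := le_trans (measure_mono hsub) hcheb
    have h2 : P (Iic B) + P (Ioi B) = 1 := by
      rw [← measure_union (by simp [Set.disjoint_left]) measurableSet_Ioi]
      rw [Iic_union_Ioi]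
      exact measure_univ
    have h3 : ENNReal.ofReal (1 - 1/(2*k)) ≤ P (Iic B) := by
      have : ENNReal.ofReal (1 - 1/(2*k)) + ENNReal.ofReal (1/(2*k)) = 1 := by
        rw [← ENNReal.ofReal_add (by linarith) (by positivity)]
        norm_num
      calc ENNReal.ofReal (1 - 1/(2*k)) = 1 - ENNReal.ofReal (1/(2*k)) := by
            rw [← this, ENNReal.add_sub_cancel_right ENNReal.ofReal_ne_top]
        _ ≤ 1 - P (Ioi B) := by
            exact tsub_le_tsub_left h1 1
        _ ≤ P (Iic B) := by
            rw [← h2]; simp [ENNReal.add_sub_cancel_right]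
    rw [hFtoReal]
    calc (1:ℝ) - 1/(2*k) = (ENNReal.ofReal (1 - 1/(2*k))).toReal :=
          (ENNReal.toReal_ofReal (by linarith)).symm
      _ ≤ (P (Iic B)).toReal := ENNReal.toReal_mono (measure_ne_top P _) h3
  -- quantile m with F m = 1 - 1/k
  have hAB : A ≤ B := by simp only [hA, hB]; linarith
  have hinvk : (1:ℝ)/k ≤ 1/2 := by
    rw [div_le_div_iff₀ (by positivity) (by norm_num)]; linarith
  have hkk : (1:ℝ)/(2*k) ≤ 1/k := by
    rw [div_le_div_iff₀ (by positivity) (by positivity)]; nlinarith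
  have hq1 : F A ≤ 1 - 1/k := by
    have h2 : (1:ℝ)/k + 1/(2*k) ≤ 1 := by linarith
    linarith
  have hq2 : (1 - 1/k : ℝ) ≤ F B := by linarith
  obtain ⟨m, hmAB, hFm⟩ : ∃ m ∈ Icc A B, F m = 1 - 1/k := by
    have h := intermediate_value_Icc hAB hFcont.continuousOn
    obtain ⟨m, hm, hFm⟩ := h ⟨hq1, hq2⟩
    exact ⟨m, hm, hFm⟩
  have hmB : m < B := by
    rcases lt_or_ge m B with h | h
    · exact h
    · exfalso
      have : F B ≤ F m := hFmono h
      rw [hFm] at this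
      have h1k : (1:ℝ)/(2*k) < 1/k := by
        rw [div_lt_div_iff₀ (by positivity) (by positivity)]; nlinarith
      linarith
  set L := B - m with hL
  have hLpos : 0 < L := by simp only [hL]; linarith
  set N := ⌈L / ξ⌉₊ with hN
  have hN1 : 1 ≤ N := Nat.one_le_iff_ne_zero.2 (by
    simp only [hN, ne_eq, Nat.ceil_eq_zero, not_le]
    positivity)
  -- intervals
  set a : ℕ → ℝ := fun i => m + i * ξ with ha
  have hamono : ∀ i j : ℕ, i ≤ j → a i ≤ a j := by
    intro i j hij
    simp only [ha]
    have : (i:ℝ) ≤ j := by exact_mod_cast hij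
    nlinarith
  set p : ℕ → ℝ := fun i => F (a (i+1)) - F (a i) with hp
  have hpnn : ∀ i, 0 ≤ p i := fun i => sub_nonneg.2 (hFmono (hamono i (i+1) (by omega)))
  have hs : ∀ i : ℕ, ∃ s ∈ Icc (a i) (a (i+1)), F s = F (a i) + p i / 2 := by
    intro i
    have h := intermediate_value_Icc (hamono i (i+1) (by omega)) hFcont.continuousOn
    apply h
    have hpi := hpnn i
    simp only [hp] at hpi
    constructor
    · simp only [hp]; linarith
    · simp only [hp]; linarith
  choose s hsmem hsval using hs
  -- the events
  set i0 : Fin k := ⟨0, by omega⟩ with hi0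
  set iK : Fin k := ⟨k - 1, by omega⟩ with hiK
  have hne : i0 ≠ iK := by simp [hi0, hiK, Fin.ext_iff]; omega
  set t : ℕ → Fin k → Set ℝ := fun i j =>
    if j = i0 then Ioc (s i) (a (i+1))
    else if j = iK then Ioc (a i) (s i) else Iic m with ht
  have ht0 : ∀ i, t i i0 = Ioc (s i) (a (i+1)) := fun i => by
    simp only [ht, if_pos rfl]
  have htK : ∀ i, t i iK = Ioc (a i) (s i) := fun i => by
    simp only [ht]; rw [if_neg hne.symm]; simp
  have htj : ∀ i (j : Fin k), j ≠ i0 → j ≠ iK → t i j = Iic m := fun i j h1 h2 => by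
    simp only [ht]; rw [if_neg h1, if_neg h2]
  set E : ℕ → Set (Fin k → ℝ) := fun i => univ.pi (t i) with hE
  have hEmeas : ∀ i, MeasurableSet (E i) := by
    intro i
    apply MeasurableSet.univ_pi
    intro j
    simp only [ht]
    split_ifs
    · exact measurableSet_Ioc
    · exact measurableSet_Ioc
    · exact measurableSet_Iic
  have hFmnn : 0 ≤ F m := hFnonneg m
  have hEmeasure : ∀ i, (Measure.pi fun _ : Fin k => P) (E i)
      = ENNReal.ofReal ((p i / 2)^2 * (F m)^(k-2)) := by
    intro i
    have hme : (Measure.pi fun _ : Fin k => P) (univ.pi (t i))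
        = P (Ioc (s i) (a (i+1))) * P (Ioc (a i) (s i)) * P (Iic m)^(k-2) :=
      pi_two_special_measure P k hk _ _ _
    have h1 : P (Ioc (s i) (a (i+1))) = ENNReal.ofReal (p i / 2) := by
      rw [hIoc]
      congr 1
      have := hsval i
      simp only [hp] at this ⊢
      linarith
    have h2 : P (Ioc (a i) (s i)) = ENNReal.ofReal (p i / 2) := by
      rw [hIoc]
      congr 1
      have := hsval i
      simp only [hp] at this ⊢
      linarith
    have h3 : P (Iic m) = ENNReal.ofReal (F m) := (ofReal_cdf P m).symm
    have hpi : (0:ℝ) ≤ p i / 2 := div_nonneg (hpnn i) (by norm_num)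
    have e1 : ENNReal.ofReal (p i/2) * ENNReal.ofReal (p i/2)
        = ENNReal.ofReal ((p i/2)*(p i/2)) := (ENNReal.ofReal_mul hpi).symm
    have e2 : ENNReal.ofReal (F m) ^ (k-2) = ENNReal.ofReal ((F m)^(k-2)) :=
      (ENNReal.ofReal_pow hFmnn _).symm
    have e3 : ENNReal.ofReal ((p i/2)*(p i/2)) * ENNReal.ofReal ((F m)^(k-2))
        = ENNReal.ofReal ((p i/2)*(p i/2) * (F m)^(k-2)) :=
      (ENNReal.ofReal_mul (mul_nonneg hpi hpi)).symm
    rw [hE, hme, h1, h2, h3, e2, e1, e3]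
    congr 1
    ring
  -- events are inside the target event
  have ham : ∀ i : ℕ, m ≤ a i := by
    intro i
    simp only [ha]
    have : (0:ℝ) ≤ (i:ℝ) * ξ := by positivity
    linarith
  have hsubE : ∀ i : ℕ, E i ⊆ {z : Fin k → ℝ |
      (∀ j : Fin k, j ≠ i0 → z i0 > z j) ∧ z i0 - z iK ≤ ξ} := by
    intro i z hz
    simp only [hE, Set.mem_univ_pi] at hz
    have h0 := hz i0
    have hK := hz iK
    rw [ht0] at h0
    rw [htK] at hK
    have hsi := hsmem i
    constructor
    · intro j hj
      have hjz := hz j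
      by_cases hjK : j = iK
      · subst hjK
        rw [htK] at hjz
        calc z iK ≤ s i := hjz.2
          _ < z i0 := h0.1
      · rw [htj i j hj hjK] at hjz
        calc z j ≤ m := hjz
          _ ≤ a i := ham i
          _ ≤ s i := hsi.1
          _ < z i0 := h0.1
    · have hd : a (i+1) - a i = ξ := by simp only [ha]; push_cast; ring
      have := h0.2
      have := hK.1
      linarith
  -- disjointness
  have hdisj : ∀ i j : ℕ, i < j → Disjoint (E i) (E j) := by
    intro i j hij
    rw [Set.disjoint_left]
    intro z hzi hzj
    have h1 := (Set.mem_univ_pi.1 hzi) iK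
    have h2 := (Set.mem_univ_pi.1 hzj) iK
    rw [htK] at h1 h2
    have h3 : s i ≤ a (i+1) := (hsmem i).2
    have h4 : a (i+1) ≤ a j := hamono (i+1) j (by omega)
    have h5 : a j < z iK := h2.1
    have h6 : z iK ≤ s i := h1.2
    linarith
  have hpd : Set.PairwiseDisjoint ↑(Finset.range N) E := by
    intro i _ j _ hij
    rcases lt_or_gt_of_ne hij with h | h
    · exact hdisj i j h
    · exact (hdisj j i h).symm
  -- measure of the union
  set Q := (Measure.pi fun _ : Fin k => P) with hQ
  have hUeq : Q (⋃ i ∈ Finset.range N, E i)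
      = ∑ i ∈ Finset.range N, ENNReal.ofReal ((p i / 2)^2 * (F m)^(k-2)) := by
    rw [measure_biUnion_finset hpd (fun b _ => hEmeas b)]
    exact Finset.sum_congr rfl fun i _ => hEmeasure i
  have hUsub : (⋃ i ∈ Finset.range N, E i) ⊆ {z : Fin k → ℝ |
      (∀ j : Fin k, j ≠ i0 → z i0 > z j) ∧ z i0 - z iK ≤ ξ} := by
    simp only [Set.iUnion_subset_iff]
    exact fun i _ => hsubE i
  have hkey : (Q {z : Fin k → ℝ |
      (∀ j : Fin k, j ≠ i0 → z i0 > z j) ∧ z i0 - z iK ≤ ξ}).toReal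
      ≥ ∑ i ∈ Finset.range N, (p i / 2)^2 * (F m)^(k-2) := by
    have hmono : Q (⋃ i ∈ Finset.range N, E i) ≤ Q {z : Fin k → ℝ |
        (∀ j : Fin k, j ≠ i0 → z i0 > z j) ∧ z i0 - z iK ≤ ξ} := measure_mono hUsub
    have ht1 : (Q (⋃ i ∈ Finset.range N, E i)).toReal
        = ∑ i ∈ Finset.range N, (p i / 2)^2 * (F m)^(k-2) := by
      rw [hUeq, ENNReal.toReal_sum (fun i _ => ENNReal.ofReal_ne_top)]
      exact Finset.sum_congr rfl fun i _ =>
        ENNReal.toReal_ofReal (by positivity)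
    rw [← ht1]
    exact ENNReal.toReal_mono (measure_ne_top _ _) hmono
  -- the sums
  have htel : ∑ i ∈ Finset.range N, p i = F (a N) - F m := by
    have h := Finset.sum_range_sub (fun i => F (a i)) N
    have ha0 : a 0 = m := by simp [ha]
    calc ∑ i ∈ Finset.range N, p i = ∑ i ∈ Finset.range N, (F (a (i+1)) - F (a i)) := rfl
      _ = F (a N) - F (a 0) := h
      _ = F (a N) - F m := by rw [ha0]
  have hSP : 1/(2*(k:ℝ)) ≤ ∑ i ∈ Finset.range N, p i := by
    rw [htel]
    have hLN : L ≤ N * ξ := by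
      have h := Nat.le_ceil (L/ξ)
      rw [← hN] at h
      calc L = (L/ξ) * ξ := by field_simp
        _ ≤ N * ξ := by nlinarith [hξ]
    have haN : B ≤ a N := by
      simp only [ha]
      have : L = B - m := hL
      linarith
    have hFBN : F B ≤ F (a N) := hFmono haN
    have heq : (1:ℝ)/k - 1/(2*k) = 1/(2*k) := by field_simp; ring
    rw [hFm]
    linarith
  have hCS : (∑ i ∈ Finset.range N, p i)^2 ≤ N * ∑ i ∈ Finset.range N, (p i)^2 := by
    have h := sq_sum_le_card_mul_sum_sq (s := Finset.range N) (f := p)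
    simpa using h
  -- (F m)^(k-2) ≥ 1/8
  have hC8 : (1:ℝ)/8 ≤ (F m)^(k-2) := by
    have hexp : Real.exp (-(2/k)) ≤ F m := by
      rw [hFm]
      have h1 : (1:ℝ) + 2/k ≤ Real.exp (2/k) := by
        have := Real.add_one_le_exp (2/(k:ℝ))
        linarith
      have h2 : (0:ℝ) < 1 + 2/k := by positivity
      have h3 : (1+2/(k:ℝ))⁻¹ ≤ 1 - 1/k := by
        rw [inv_le_iff_one_le_mul₀ h2]
        have hkinv : (0:ℝ) < 1/k := by positivity
        have : ((1:ℝ) - 1/k) * (1 + 2/k) = 1 + 1/k - 2/k^2 := by field_simp; ring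
        have h4 : (2:ℝ)/k^2 ≤ 1/k := by
          rw [div_le_div_iff₀ (by positivity) (by positivity)]
          nlinarith
        nlinarith
      rw [Real.exp_neg]
      calc (Real.exp (2/(k:ℝ)))⁻¹ ≤ (1+2/(k:ℝ))⁻¹ := by
            apply inv_anti₀ h2 h1
        _ ≤ 1 - 1/k := h3
    have he0 : (0:ℝ) < Real.exp (-(2/k)) := Real.exp_pos _
    have h1 : Real.exp (-(2/k)) ^ (k-2) ≤ (F m)^(k-2) :=
      pow_le_pow_left₀ he0.le hexp _
    have h2 : Real.exp (-(2/(k:ℝ)))^(k-2) = Real.exp ((k-2:ℕ) * (-(2/k))) := by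
      rw [Real.exp_nat_mul]
    have hkk2 : ((k-2:ℕ):ℝ) = (k:ℝ) - 2 := by
      push_cast [Nat.cast_sub hk]; ring
    have h3 : Real.exp (-2) ≤ Real.exp ((k-2:ℕ) * (-(2/(k:ℝ)))) := by
      apply Real.exp_le_exp.2
      rw [hkk2]
      rw [mul_neg, neg_le_neg_iff, mul_div_assoc']
      rw [div_le_iff₀ (by positivity)]
      nlinarith
    have h4 : (1:ℝ)/8 ≤ Real.exp (-2) := by
      have he2 : Real.exp 2 = Real.exp 1 * Real.exp 1 := by
        rw [← Real.exp_add]; norm_num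
      have hd9 := Real.exp_one_lt_d9
      have h8 : Real.exp 2 ≤ 8 := by nlinarith [Real.exp_pos 1]
      have := one_div_le_one_div_of_le (Real.exp_pos 2) h8
      rw [Real.exp_neg, ← one_div]
      linarith
    calc (1:ℝ)/8 ≤ Real.exp (-2) := h4
      _ ≤ Real.exp ((k-2:ℕ) * (-(2/(k:ℝ)))) := h3
      _ = Real.exp (-(2/(k:ℝ)))^(k-2) := h2.symm
      _ ≤ (F m)^(k-2) := h1
  -- final arithmetic
  have hNpos : (0:ℝ) < N := by
    have : (0:ℕ) < N := by omega
    exact_mod_cast this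
  have hsqk : (0:ℝ) < Real.sqrt k := Real.sqrt_pos.2 (by positivity)
  have hsum2 : 1/(128 * (k:ℝ)^2 * N) ≤ ∑ i ∈ Finset.range N, (p i / 2)^2 * (F m)^(k-2) := by
    have hSnn : (0:ℝ) ≤ ∑ i ∈ Finset.range N, (p i)^2 :=
      Finset.sum_nonneg fun i _ => sq_nonneg _
    have h1 : ∑ i ∈ Finset.range N, (p i / 2)^2 * (F m)^(k-2)
        = ((F m)^(k-2)/4) * ∑ i ∈ Finset.range N, (p i)^2 := by
      rw [Finset.mul_sum]
      exact Finset.sum_congr rfl fun i _ => by ring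
    have hk2pos : (0:ℝ) < 1/(2*(k:ℝ)) := by positivity
    have h2 : (1:ℝ)/(4*(k:ℝ)^2) ≤ (∑ i ∈ Finset.range N, p i)^2 := by
      have hh : (1/(2*(k:ℝ)))^2 ≤ (∑ i ∈ Finset.range N, p i)^2 := by
        apply sq_le_sq' <;> nlinarith [hSP, hk2pos]
      calc (1:ℝ)/(4*(k:ℝ)^2) = (1/(2*(k:ℝ)))^2 := by field_simp; ring
        _ ≤ _ := hh
    have h3 : (1:ℝ)/(4*(k:ℝ)^2) ≤ N * ∑ i ∈ Finset.range N, (p i)^2 :=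
      le_trans h2 hCS
    have h4 : (1:ℝ)/(4*(k:ℝ)^2*N) ≤ ∑ i ∈ Finset.range N, (p i)^2 := by
      rw [div_le_iff₀ (by positivity)]
      calc (1:ℝ) = (1/(4*(k:ℝ)^2)) * (4*(k:ℝ)^2) := by field_simp
        _ ≤ (N * ∑ i ∈ Finset.range N, (p i)^2) * (4*(k:ℝ)^2) := by nlinarith
        _ = (∑ i ∈ Finset.range N, (p i)^2) * (4*(k:ℝ)^2*N) := by ring
    calc (1:ℝ)/(128*(k:ℝ)^2*N) = (1/8/4) * (1/(4*(k:ℝ)^2*N)) := by field_simp; ring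
      _ ≤ ((F m)^(k-2)/4) * ∑ i ∈ Finset.range N, (p i)^2 := by
          apply mul_le_mul (by linarith) h4 (by positivity)
          positivity
      _ = ∑ i ∈ Finset.range N, (p i / 2)^2 * (F m)^(k-2) := h1.symm
  have hminle : min (1/8 : ℝ) (ξ / (64 * σP * Real.sqrt k)) ≤ 1/(8*N) := by
    rcases eq_or_lt_of_le hN1 with h1 | h1
    · calc min (1/8 : ℝ) (ξ / (64 * σP * Real.sqrt k)) ≤ 1/8 := min_le_left _ _
        _ = 1/(8*N) := by rw [← h1]; norm_num
    · -- N ≥ 2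
      have hgt1 : (1:ℝ) < L/ξ := by
        have := (Nat.lt_ceil (n := 1) (a := L/ξ)).1 (by rw [← hN]; omega)
        exact_mod_cast this
      have hceil : (N:ℝ) < L/ξ + 1 := by
        rw [hN]
        exact Nat.ceil_lt_add_one (by positivity)
      have hN2L : (N:ℝ) ≤ 2*L/ξ := by
        have : L/ξ + 1 ≤ 2*L/ξ := by
          rw [two_mul, add_div]
          linarith
        linarith
      have hmA : A ≤ m := hmAB.1
      have hL2r : L ≤ 2*r := by
        simp only [hL, hA, hB] at *
        linarith
      have hsqrt2 : Real.sqrt 2 ≤ 3/2 := by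
        rw [show (3:ℝ)/2 = Real.sqrt ((3/2)^2) by rw [Real.sqrt_sq]; norm_num]
        apply Real.sqrt_le_sqrt
        norm_num
      have hr3 : r ≤ (3/2) * σP * Real.sqrt k := by
        rw [hr]
        have : Real.sqrt (2*k) = Real.sqrt 2 * Real.sqrt k := Real.sqrt_mul (by norm_num) _
        rw [this]
        have h0 : (0:ℝ) ≤ Real.sqrt k := hsqk.le
        nlinarith [mul_le_mul_of_nonneg_right hsqrt2 (mul_nonneg hσ.le h0)]
      have hL3 : L ≤ 3 * σP * Real.sqrt k := by linarith
      have hfin : (8:ℝ)*N*ξ ≤ 64 * σP * Real.sqrt k := by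
        have h5 : (N:ℝ)*ξ ≤ 2*L := by
          have := mul_le_mul_of_nonneg_right hN2L hξ.le
          calc (N:ℝ)*ξ ≤ (2*L/ξ)*ξ := this
            _ = 2*L := by field_simp
        calc (8:ℝ)*N*ξ = 8*((N:ℝ)*ξ) := by ring
          _ ≤ 8*(2*L) := by linarith
          _ ≤ 16*(3*σP*Real.sqrt k) := by linarith
          _ ≤ 64 * σP * Real.sqrt k := by nlinarith
      calc min (1/8 : ℝ) (ξ / (64 * σP * Real.sqrt k)) ≤ ξ / (64 * σP * Real.sqrt k) :=
            min_le_right _ _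
        _ ≤ 1/(8*N) := by
            rw [div_le_div_iff₀ (by positivity) (by positivity)]
            nlinarith [hfin]
  -- put it together
  have hrhs : (1 / (16 * (k:ℝ)^2)) * min (1/8 : ℝ) (ξ / (64 * σP * Real.sqrt k))
      ≤ 1/(128 * (k:ℝ)^2 * N) := by
    have h1 : (1 / (16 * (k:ℝ)^2)) * min (1/8 : ℝ) (ξ / (64 * σP * Real.sqrt k))
        ≤ (1 / (16 * (k:ℝ)^2)) * (1/(8*N)) := by
      apply mul_le_mul_of_nonneg_left hminle (by positivity)
    calc (1 / (16 * (k:ℝ)^2)) * min (1/8 : ℝ) (ξ / (64 * σP * Real.sqrt k))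
        ≤ (1 / (16 * (k:ℝ)^2)) * (1/(8*N)) := h1
      _ = 1/(128 * (k:ℝ)^2 * N) := by field_simp; ring
  calc (1 / (16 * (k:ℝ)^2)) * min (1/8 : ℝ) (ξ / (64 * σP * Real.sqrt k))
      ≤ 1/(128 * (k:ℝ)^2 * N) := hrhs
    _ ≤ ∑ i ∈ Finset.range N, (p i / 2)^2 * (F m)^(k-2) := hsum2
    _ ≤ _ := hkey
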